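/- arXiv:1910.11823 — 2 statements merged into one kernel-verified Lean document; each statement's English description precedes it below -/
import Mathlib

section
/- Let (P_n) and (Q_n) be the Fibonacci product polynomials, i.e. the monic polynomial sequences defined by P_0 = Q_0 = 1, P_1(x) = x - 2, Q_1(x) = x - 3, and P_{n+1}(x) = (x-3)P_n(x) - P_{n-1}(x), Q_{n+1}(x) = (x-3)Q_n(x) - Q_{n-1}(x) for n ≥ 1. Then for every n ≥ 0: P_n(2y+3) = U_n(y) + U_{n-1}(y) and Q_n(2y+3) = U_n(y), where (U_n) are the Chebyshev polynomials of the second kind with U_{-1} = 0. -/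
open Polynomial

/-- Chebyshev polynomials of the second kind. -/
noncomputable def chebU : ℕ → Polynomial ℤ
  | 0 => 1
  | 1 => 2 * X
  | n + 2 => 2 * X * chebU (n + 1) - chebU n

/-- `U_{n-1}`, with the convention `U_{-1} = 0`. -/
noncomputable def chebUpred (n : ℕ) : Polynomial ℤ :=
  if n = 0 then 0 else chebU (n - 1)

/-- Fibonacci product polynomials `P`. -/
noncomputable def fibP : ℕ → Polynomial ℤ
  | 0 => 1
  | 1 => X - 2
  | n + 2 => (X - 3) * fibP (n + 1) - fibP n

/-- Fibonacci product polynomials `Q`. -/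
noncomputable def fibQ : ℕ → Polynomial ℤ
  | 0 => 1
  | 1 => X - 3
  | n + 2 => (X - 3) * fibQ (n + 1) - fibQ n

theorem stmt6 (n : ℕ) :
    (fibP n).comp (2 * X + 3) = chebU n + chebUpred n ∧
    (fibQ n).comp (2 * X + 3) = chebU n := by
  induction n using Nat.strong_induction_on with
  | _ n ih =>
    match n with
    | 0 => simp [fibP, fibQ, chebU, chebUpred]
    | 1 =>
      constructor <;> simp [fibP, fibQ, chebU, chebUpred] <;> ring
    | n + 2 =>
      obtain ⟨hP1, hQ1⟩ := ih (n + 1) (by omega)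
      obtain ⟨hP0, hQ0⟩ := ih n (by omega)
      have hup : chebUpred (n + 2) = chebU (n + 1) := by simp [chebUpred]
      have hup1 : chebUpred (n + 1) = chebU n := by simp [chebUpred]
      have hrec : chebU (n + 1) = 2 * X * chebU n - chebUpred n := by
        match n with
        | 0 => simp [chebU, chebUpred]
        | m + 1 => simp [chebUpred, show chebU (m+2) = 2*X*chebU (m+1) - chebU m from rfl]
      constructor
      · rw [show fibP (n + 2) = (X - 3) * fibP (n + 1) - fibP n from rfl]
        simp only [sub_comp, mul_comp, X_comp, ofNat_comp, hP1, hP0,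
          show chebU (n + 2) = 2 * X * chebU (n + 1) - chebU n from rfl,
          hup, hup1, hrec]
        push_cast
        ring
      · rw [show fibQ (n + 2) = (X - 3) * fibQ (n + 1) - fibQ n from rfl]
        simp only [sub_comp, mul_comp, X_comp, ofNat_comp, hQ1, hQ0,
          show chebU (n + 2) = 2 * X * chebU (n + 1) - chebU n from rfl]
        push_cast
        ring
end

section
/- For every n ≥ 1, the Fibonacci number F_{n+2} equals the product ∏_{l=1}^{⌊(n+1)/2⌋} (4·cos²(lπ/(n+2)) + 1). -/
open Complex Finset Real goldenRatio

noncomputable def zeta (m : ℕ) : ℂ := Complex.exp (Real.pi * Complex.I / m)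

lemma zeta_prim {m : ℕ} (hm : m ≠ 0) : IsPrimitiveRoot (zeta m) (2 * m) := by
  have h := Complex.isPrimitiveRoot_exp (2 * m) (by omega)
  have hmc : (m : ℂ) ≠ 0 := Nat.cast_ne_zero.mpr hm
  have he : (2 * (Real.pi : ℂ) * Complex.I / ((2 * m : ℕ) : ℂ)) = Real.pi * Complex.I / m := by
    push_cast
    field_simp
  rwa [he] at h

lemma prod_range_zeta {m : ℕ} (hm : m ≠ 0) (x : ℂ) :
    ∏ k ∈ Finset.range (2 * m), (x - zeta m ^ k) = x ^ (2 * m) - 1 := by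
  have hp := zeta_prim hm
  have h2m : 0 < 2 * m := by omega
  have key := hp.pow_sub_pow_eq_prod_sub_mul (x := x) (y := 1) h2m
  simp only [one_pow, mul_one] at key
  rw [key]
  refine Finset.prod_nbij (fun k => zeta m ^ k) ?_ ?_ ?_ ?_
  · intro k _
    exact (Polynomial.mem_nthRootsFinset h2m 1).2
      (by rw [← pow_mul, mul_comm k, pow_mul, hp.pow_eq_one, one_pow])
  · intro a ha b hb hab
    simp only [coe_range, Set.mem_Iio] at ha hb
    exact hp.pow_inj ha hb hab
  · intro μ hμ
    have hμ' : μ ^ (2 * m) = 1 := (Polynomial.mem_nthRootsFinset h2m 1).1 hμ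
    have : NeZero (2 * m) := ⟨by omega⟩
    obtain ⟨i, hi, hie⟩ := hp.eq_pow_of_pow_eq_one hμ'
    exact ⟨i, by simpa using hi, hie⟩
  · intro k _
    rfl

lemma key_fib (m : ℕ) (hm : 3 ≤ m) :
    (Nat.fib m : ℝ) = ∏ l ∈ Finset.Icc 1 ((m - 1) / 2),
      (4 * Real.cos (l * Real.pi / m) ^ 2 + 1) := by
  have hm0 : m ≠ 0 := by omega
  have hmc : (m : ℂ) ≠ 0 := Nat.cast_ne_zero.mpr hm0
  set ζ : ℂ := zeta m with hζdef
  have hζ0 : ζ ≠ 0 := Complex.exp_ne_zero _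
  have hζ2m : ζ ^ (2 * m) = 1 := (zeta_prim hm0).pow_eq_one
  have hζm : ζ ^ m = -1 := by
    rw [hζdef, zeta, ← Complex.exp_nat_mul]
    rw [show (m : ℂ) * (Real.pi * Complex.I / m) = Real.pi * Complex.I by field_simp]
    exact Complex.exp_pi_mul_I
  -- golden ratio facts in ℂ
  set A : ℂ := ((goldenRatio : ℝ) : ℂ) with hAdef
  set B : ℂ := ((goldenConj : ℝ) : ℂ) with hBdef
  have hAB : A * B = -1 := by
    rw [hAdef, hBdef, ← Complex.ofReal_mul, goldenRatio_mul_goldenConj]; norm_num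
  have hABsum : A + B = 1 := by
    rw [hAdef, hBdef, ← Complex.ofReal_add, goldenRatio_add_goldenConj]; norm_num
  have hA0 : A ≠ 0 := by
    rw [hAdef]
    exact_mod_cast goldenRatio_ne_zero
  have hsub : A - B = ((Real.sqrt 5 : ℝ) : ℂ) := by
    rw [hAdef, hBdef, ← Complex.ofReal_sub, goldenRatio_sub_goldenConj]
  have hsub0 : A - B ≠ 0 := by
    rw [hsub]
    simp only [ne_eq, Complex.ofReal_eq_zero]
    positivity
  -- products
  set P : ℂ → ℂ := fun x => ∏ k ∈ Finset.Ico 1 m, (x - ζ ^ k) with hPdef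
  set T : ℂ := ∏ k ∈ Finset.Ico 1 m, ζ ^ k with hTdef
  have hT0 : T ≠ 0 := Finset.prod_ne_zero_iff.2 fun k _ => pow_ne_zero _ hζ0
  set g : ℕ → ℂ := fun k => 1 + 2 * Complex.I * ((Real.cos (k * Real.pi / m) : ℝ) : ℂ) with hgdef
  set Q : ℂ := ∏ k ∈ Finset.Ico 1 m, g k with hQdef
  have hcard : (Finset.Ico 1 m).card = m - 1 := by rw [Nat.card_Ico]
  -- 2cos in terms of ζ
  have hcos : ∀ k : ℕ, ζ ^ k * ζ ^ k + 1 = 2 * ((Real.cos (k * Real.pi / m) : ℝ) : ℂ) * ζ ^ k := by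
    intro k
    have h1 : ζ ^ k = Complex.exp (((k * Real.pi / m : ℝ) : ℂ) * Complex.I) := by
      rw [hζdef, zeta, ← Complex.exp_nat_mul]
      congr 1
      push_cast
      field_simp
    have h3 : ζ ^ k + (ζ ^ k)⁻¹ = 2 * ((Real.cos (k * Real.pi / m) : ℝ) : ℂ) := by
      rw [h1, ← Complex.exp_neg,
        show -(((k * Real.pi / m : ℝ) : ℂ) * Complex.I)
          = (-((k * Real.pi / m : ℝ) : ℂ)) * Complex.I by ring,
        Complex.exp_mul_I, Complex.exp_mul_I, Complex.cos_neg, Complex.sin_neg,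
        Complex.ofReal_cos]
      ring
    have hk0 : ζ ^ k ≠ 0 := pow_ne_zero _ hζ0
    have h5 : (ζ ^ k)⁻¹ * ζ ^ k = 1 := inv_mul_cancel₀ hk0
    linear_combination ζ ^ k * h3 - h5
  -- main factorization identity
  have h1 : ∀ x : ℂ, x ^ (2 * m) - 1 =
      (x ^ 2 - 1) * (P x * ∏ k ∈ Finset.Ico 1 m, (x - ζ ^ (2 * m - k))) := by
    intro x
    rw [← prod_range_zeta hm0 x]
    rw [Finset.range_eq_Ico, Finset.prod_eq_prod_Ico_succ_bot (by omega) _]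
    rw [← Finset.prod_Ico_consecutive _ (by omega : 1 ≤ m) (by omega : m ≤ 2 * m)]
    rw [Finset.prod_eq_prod_Ico_succ_bot (by omega : m < 2 * m) _]
    have hre : ∏ k ∈ Finset.Ico (m + 1) (2 * m), (x - ζ ^ k)
        = ∏ j ∈ Finset.Ico 1 m, (x - ζ ^ (2 * m - j)) := by
      refine Finset.prod_nbij' (fun k => 2 * m - k) (fun j => 2 * m - j) ?_ ?_ ?_ ?_ ?_
      · intro k hk
        simp only [Finset.mem_Ico] at hk ⊢
        omega
      · intro j hj
        simp only [Finset.mem_Ico] at hj ⊢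
        omega
      · intro k hk
        simp only [Finset.mem_Ico] at hk
        show 2 * m - (2 * m - k) = k
        omega
      · intro j hj
        simp only [Finset.mem_Ico] at hj
        show 2 * m - (2 * m - j) = j
        omega
      · intro k hk
        simp only [Finset.mem_Ico] at hk
        show x - ζ ^ k = x - ζ ^ (2 * m - (2 * m - k))
        congr 2
        omega
    rw [hre, pow_zero, hζm]
    simp only [hPdef]
    ring
  -- relation between the reversed product and P
  have h2 : ∀ x : ℂ, x ≠ 0 →
      (∏ k ∈ Finset.Ico 1 m, (x - ζ ^ (2 * m - k))) * T = (-x) ^ (m - 1) * P x⁻¹ := by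
    intro x hx
    rw [hTdef, ← Finset.prod_mul_distrib]
    have hcong : ∀ k ∈ Finset.Ico 1 m,
        (x - ζ ^ (2 * m - k)) * ζ ^ k = (-x) * (x⁻¹ - ζ ^ k) := by
      intro k hk
      simp only [Finset.mem_Ico] at hk
      have hpow : ζ ^ (2 * m - k) * ζ ^ k = 1 := by
        rw [← pow_add, show 2 * m - k + k = 2 * m by omega, hζ2m]
      field_simp
      linear_combination (-1 : ℂ) * hpow
    rw [Finset.prod_congr rfl hcong, Finset.prod_mul_distrib, Finset.prod_const, hcard]
  -- relation between Q and P at I*A, I*B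
  have h3 : Q * T = Complex.I ^ (m - 1) * (P (Complex.I * A) * P (Complex.I * B)) := by
    rw [hQdef, hTdef, ← Finset.prod_mul_distrib]
    have hcong : ∀ k ∈ Finset.Ico 1 m, g k * ζ ^ k
        = Complex.I * ((Complex.I * A - ζ ^ k) * (Complex.I * B - ζ ^ k)) := by
      intro k hk
      have hc := hcos k
      simp only [hgdef]
      linear_combination (-Complex.I) * hc
        + ((A + B) * ζ ^ k - Complex.I * (A * B)) * Complex.I_sq
        - ζ ^ k * hABsum + Complex.I * hAB
    rw [Finset.prod_congr rfl hcong, Finset.prod_mul_distrib, Finset.prod_mul_distrib,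
      Finset.prod_const, hcard]
  -- inverse of I*A
  have h4 : (Complex.I * A)⁻¹ = Complex.I * B := by
    have hIAB : (Complex.I * A) * (Complex.I * B) = 1 := by
      linear_combination (A * B) * Complex.I_sq - hAB
    exact inv_eq_of_mul_eq_one_right hIAB
  have hIA0 : Complex.I * A ≠ 0 := mul_ne_zero Complex.I_ne_zero hA0
  -- combine
  have e1 := h1 (Complex.I * A)
  have e2 := h2 (Complex.I * A) hIA0
  rw [h4] at e2
  have step : ((Complex.I * A) ^ (2 * m) - 1) * Complex.I ^ (m - 1) * T
      = ((Complex.I * A) ^ 2 - 1) * (-(Complex.I * A)) ^ (m - 1) * Q * T := by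
    calc ((Complex.I * A) ^ (2 * m) - 1) * Complex.I ^ (m - 1) * T
        = ((Complex.I * A) ^ 2 - 1) * P (Complex.I * A)
            * ((∏ k ∈ Finset.Ico 1 m, (Complex.I * A - ζ ^ (2 * m - k))) * T)
            * Complex.I ^ (m - 1) := by
          rw [e1]; ring
      _ = ((Complex.I * A) ^ 2 - 1) * P (Complex.I * A)
            * ((-(Complex.I * A)) ^ (m - 1) * P (Complex.I * B)) * Complex.I ^ (m - 1) := by
          rw [e2]
      _ = ((Complex.I * A) ^ 2 - 1) * (-(Complex.I * A)) ^ (m - 1)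
            * (Complex.I ^ (m - 1) * (P (Complex.I * A) * P (Complex.I * B))) := by ring
      _ = ((Complex.I * A) ^ 2 - 1) * (-(Complex.I * A)) ^ (m - 1) * (Q * T) := by rw [← h3]
      _ = _ := by ring
  have hQ2 : ((Complex.I * A) ^ (2 * m) - 1) * Complex.I ^ (m - 1)
      = ((Complex.I * A) ^ 2 - 1) * (-(Complex.I * A)) ^ (m - 1) * Q := by
    have := mul_right_cancel₀ hT0 (by linear_combination step :
      (((Complex.I * A) ^ (2 * m) - 1) * Complex.I ^ (m - 1)) * T
      = (((Complex.I * A) ^ 2 - 1) * (-(Complex.I * A)) ^ (m - 1) * Q) * T)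
    exact this
  -- rewrite powers
  have hJ0 : Complex.I ^ (m - 1) ≠ 0 := pow_ne_zero _ Complex.I_ne_zero
  have p3 : (-(Complex.I * A)) ^ (m - 1)
      = (-1 : ℂ) ^ (m - 1) * (Complex.I ^ (m - 1) * A ^ (m - 1)) := by
    rw [neg_pow, mul_pow]
  have p4 : (Complex.I * A) ^ (2 * m) = (-1 : ℂ) ^ m * (A ^ m) ^ 2 := by
    rw [mul_pow, pow_mul, Complex.I_sq, ← pow_mul, mul_comm m 2]
  have p5 : (Complex.I * A) ^ 2 = -A ^ 2 := by
    rw [mul_pow, Complex.I_sq]; ring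
  rw [p3, p4, p5] at hQ2
  set c : ℂ := (-1 : ℂ) ^ m with hcdef
  set d : ℂ := (-1 : ℂ) ^ (m - 1) with hddef
  set u : ℂ := A ^ m with hudef
  set v : ℂ := B ^ m with hvdef
  set w : ℂ := A ^ (m - 1) with hwdef
  have hQ3 : c * u ^ 2 - 1 = (-A ^ 2 - 1) * d * w * Q :=
    mul_right_cancel₀ hJ0 (by linear_combination hQ2)
  -- auxiliary golden facts
  have hwu : w * A = u := by
    rw [hwdef, hudef, ← pow_succ]
    congr 1
    omega
  have huv : u * v = c := by
    rw [hudef, hvdef, hcdef, ← mul_pow, hAB]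
  have hdc : d * (-1) = c := by
    rw [hddef, hcdef, ← pow_succ]
    congr 1
    omega
  have hcc : c * c = 1 := by
    rw [hcdef, ← mul_pow]
    norm_num
  have hc0 : c ≠ 0 := by
    rw [hcdef]
    exact pow_ne_zero _ (by norm_num)
  have hu0 : u ≠ 0 := pow_ne_zero _ hA0
  -- final value of Q
  have hQval : Q * (A - B) = u - v := by
    have hcu0 : c * u ≠ 0 := mul_ne_zero hc0 hu0
    apply mul_left_cancel₀ hcu0
    linear_combination (-(u * Q * (A - B))) * hdc + (A - B) * d * Q * hwu
      + d * w * Q * hAB - hQ3 + c * huv + hcc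
  -- Q equals fib m
  have hQfib : Q = ((Nat.fib m : ℝ) : ℂ) := by
    have hfib : ((Nat.fib m : ℝ) : ℂ) = (u - v) / (A - B) := by
      rw [Real.coe_fib_eq, hsub, hudef, hvdef, hAdef, hBdef]
      push_cast
      ring
    rw [hfib, eq_div_iff hsub0, hQval]
  -- pairing of factors
  set L : ℕ := (m - 1) / 2 with hLdef
  have hL1 : 1 ≤ L + 1 := by omega
  have hLm : L + 1 ≤ m := by omega
  have hsplit1 : Q = (∏ k ∈ Finset.Ico 1 (L + 1), g k) * ∏ k ∈ Finset.Ico (L + 1) m, g k := by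
    rw [hQdef, Finset.prod_Ico_consecutive _ hL1 hLm]
  have hre2 : ∏ k ∈ Finset.Ico (L + 1) m, g k = ∏ j ∈ Finset.Ico 1 (m - L), g (m - j) := by
    refine Finset.prod_nbij' (fun k => m - k) (fun j => m - j) ?_ ?_ ?_ ?_ ?_
    · intro k hk
      simp only [Finset.mem_Ico] at hk ⊢
      omega
    · intro j hj
      simp only [Finset.mem_Ico] at hj ⊢
      omega
    · intro k hk
      simp only [Finset.mem_Ico] at hk
      show m - (m - k) = k
      omega
    · intro j hj
      simp only [Finset.mem_Ico] at hj
      show m - (m - j) = j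
      omega
    · intro k hk
      simp only [Finset.mem_Ico] at hk
      show g k = g (m - (m - k))
      congr 1
      omega
  have hsplit2 : ∏ j ∈ Finset.Ico 1 (m - L), g (m - j)
      = (∏ j ∈ Finset.Ico 1 (L + 1), g (m - j)) * ∏ j ∈ Finset.Ico (L + 1) (m - L), g (m - j) := by
    rw [Finset.prod_Ico_consecutive _ hL1 (by omega : L + 1 ≤ m - L)]
  have htriv : ∏ j ∈ Finset.Ico (L + 1) (m - L), g (m - j) = 1 := by
    apply Finset.prod_eq_one
    intro j hj
    simp only [Finset.mem_Ico] at hj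
    have h2j : 2 * j = m := by omega
    rw [show m - j = j by omega, hgdef]
    simp only
    have hjcos : (j : ℝ) * Real.pi / m = Real.pi / 2 := by
      have hj0 : (j : ℝ) ≠ 0 := Nat.cast_ne_zero.mpr (by omega)
      rw [show (m : ℝ) = 2 * j by exact_mod_cast h2j.symm]
      field_simp
    rw [hjcos, Real.cos_pi_div_two]
    norm_num
  have hpair : ∀ l ∈ Finset.Ico 1 (L + 1),
      g l * g (m - l) = ((4 * Real.cos (l * Real.pi / m) ^ 2 + 1 : ℝ) : ℂ) := by
    intro l hl
    simp only [Finset.mem_Ico] at hl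
    have hlm : l ≤ m := by omega
    have hcosneg : Real.cos (((m - l : ℕ) : ℝ) * Real.pi / m)
        = -Real.cos ((l : ℝ) * Real.pi / m) := by
      rw [Nat.cast_sub hlm]
      rw [show ((m : ℝ) - l) * Real.pi / m = Real.pi - (l : ℝ) * Real.pi / m by
        field_simp]
      exact Real.cos_pi_sub _
    rw [hgdef]
    simp only
    rw [hcosneg]
    simp only [Complex.ofReal_cos]
    push_cast
    linear_combination (-4 * Complex.cos ((l : ℂ) * (Real.pi : ℂ) / (m : ℂ)) ^ 2) * Complex.I_sq
  have hQprod : Q = ((∏ l ∈ Finset.Ico 1 (L + 1),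
      (4 * Real.cos (l * Real.pi / m) ^ 2 + 1) : ℝ) : ℂ) := by
    rw [hsplit1, hre2, hsplit2, htriv, mul_one, ← Finset.prod_mul_distrib,
      Finset.prod_congr rfl hpair]
    norm_cast
  have : ((Nat.fib m : ℝ) : ℂ) = ((∏ l ∈ Finset.Ico 1 (L + 1),
      (4 * Real.cos (l * Real.pi / m) ^ 2 + 1) : ℝ) : ℂ) := by
    rw [← hQfib, hQprod]
  have hreal : (Nat.fib m : ℝ) = ∏ l ∈ Finset.Ico 1 (L + 1),
      (4 * Real.cos (l * Real.pi / m) ^ 2 + 1) := by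
    exact_mod_cast this
  rw [hreal, Finset.Ico_add_one_right_eq_Icc]

theorem stmt11 (n : ℕ) (hn : 1 ≤ n) :
    (Nat.fib (n + 2) : ℝ) =
      ∏ l ∈ Finset.Icc 1 ((n + 1) / 2),
        (4 * Real.cos (l * Real.pi / (n + 2)) ^ 2 + 1) := by
  have h := key_fib (n + 2) (by omega)
  simpa using h
end
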